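/- Let L/K be a finite Galois extension of fields with abelian Galois group G, M a positive integer, and suppose L contains no nontrivial M-th root of unity (equivalently μ_M(L) = 1). Then the inclusion K^× ↪ L^× induces an isomorphism K^×/(K^×)^M ≅ (L^×/(L^×)^M)^G between the M-power quotient of K^× and the G-invariants of the M-power quotient of L^×. -/

import Mathlib

/-- An element of `L` fixed by every `K`-automorphism lies in the image of `K`. -/
lemma fixed_mem_range_algebraMap (K L : Type*) [Field K] [Field L] [Algebra K L]
    [FiniteDimensional K L] [IsGalois K L] (x : L) (hx : ∀ σ : L ≃ₐ[K] L, σ x = x) :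
    ∃ a : K, algebraMap K L a = x := by
  have hfix : IntermediateField.fixedField (⊤ : Subgroup (L ≃ₐ[K] L)) = ⊥ :=
    ((IsGalois.tfae (F := K) (E := L)).out 0 1).mp (inferInstance : IsGalois K L)
  have hmem : x ∈ IntermediateField.fixedField (⊤ : Subgroup (L ≃ₐ[K] L)) := by
    intro g; exact hx g
  rw [hfix, IntermediateField.mem_bot] at hmem
  obtain ⟨a, ha⟩ := hmem
  exact ⟨a, ha⟩

/-- Let `L/K` be a finite Galois extension with abelian Galois group `G`, `M ≥ 1`, and
suppose `L` has no nontrivial `M`-th roots of unity.  Then `K^×/(K^×)^M` maps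
isomorphically onto the `G`-invariants of `L^×/(L^×)^M`: the induced map is injective
(an element of `K^×` that is an `M`-th power in `L^×` is an `M`-th power in `K^×`),
and every class in `L^×/(L^×)^M` fixed by all of `G` comes from `K^×`. -/
theorem stmt6 (K L : Type*) [Field K] [Field L] [Algebra K L] [FiniteDimensional K L]
    [IsGalois K L] (hab : ∀ σ τ : L ≃ₐ[K] L, σ * τ = τ * σ)
    (M : ℕ) (hM : 0 < M) (hμ : ∀ x : L, x ^ M = 1 → x = 1) :
    (∀ a : Kˣ, (∃ b : Lˣ, algebraMap K L (a : K) = (b : L) ^ M) →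
        ∃ c : Kˣ, a = c ^ M) ∧
      (∀ x : Lˣ, (∀ σ : L ≃ₐ[K] L, ∃ y : Lˣ, σ (x : L) / (x : L) = (y : L) ^ M) →
        ∃ (a : Kˣ) (y : Lˣ), (x : L) = algebraMap K L (a : K) * (y : L) ^ M) := by
  -- injectivity of the `M`-th power map on `L`
  have hinj : ∀ u v : L, u ^ M = v ^ M → v ≠ 0 → u = v := by
    intro u v h hv
    have : (u / v) ^ M = 1 := by
      rw [div_pow, h, div_self (pow_ne_zero _ hv)]
    have := hμ _ this
    field_simp at this
    exact this
  constructor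
  · rintro a ⟨b, hb⟩
    -- b is fixed by every σ
    have hbfix : ∀ σ : L ≃ₐ[K] L, σ (b : L) = (b : L) := by
      intro σ
      apply hinj
      · rw [← map_pow, ← hb, AlgEquiv.commutes, hb]
      · exact b.ne_zero
    obtain ⟨c, hc⟩ := fixed_mem_range_algebraMap K L (b : L) hbfix
    have hc0 : c ≠ 0 := by
      rintro rfl
      simp at hc
      exact b.ne_zero hc.symm
    refine ⟨Units.mk0 c hc0, ?_⟩
    have : algebraMap K L ((a : K)) = algebraMap K L (c ^ M) := by
      rw [map_pow, hc, ← hb]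
    have hK : (a : K) = c ^ M := (algebraMap K L).injective this
    ext
    simpa using hK
  · intro x hx
    -- choose the (unique) M-th roots
    choose y hy using hx
    -- y is a 1-cocycle
    have hcoc : groupCohomology.IsMulCocycle₁ y := by
      intro σ τ
      have hne : (x : L) ≠ 0 := x.ne_zero
      have e1 : (σ * τ) (x : L) = ((y (σ * τ) : L)) ^ M * (x : L) :=
        (div_eq_iff hne).mp (hy (σ * τ))
      have e2 : τ (x : L) = ((y τ : L)) ^ M * (x : L) := (div_eq_iff hne).mp (hy τ)
      have e3 : σ (x : L) = ((y σ : L)) ^ M * (x : L) := (div_eq_iff hne).mp (hy σ)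
      have key : ((y (σ * τ) : L)) ^ M * (x : L) =
          (σ ((y τ : L))) ^ M * (((y σ : L)) ^ M * (x : L)) := by
        rw [← e3, ← map_pow, ← map_mul, ← e2, ← AlgEquiv.mul_apply, e1]
      have key2 : ((y (σ * τ) : L)) ^ M = (σ ((y τ : L))) ^ M * ((y σ : L)) ^ M :=
        mul_right_cancel₀ hne (by rw [key]; ring)
      rw [Units.ext_iff]
      apply hinj _ _ ?_ (σ • y τ * y σ).ne_zero
      have hcoe : ((σ • y τ * y σ : Lˣ) : L) = σ ((y τ : L)) * (y σ : L) := rfl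
      rw [hcoe, mul_pow]
      exact key2
    obtain ⟨z, hz⟩ :=
      groupCohomology.isMulCoboundary₁_of_isMulCocycle₁_of_aut_to_units y hcoc
    -- x / z^M is fixed by every σ
    set w : L := (x : L) / (z : L) ^ M with hw
    have hwfix : ∀ σ : L ≃ₐ[K] L, σ w = w := by
      intro σ
      have hzσ : σ (z : L) / (z : L) = (y σ : L) := by
        have := hz σ
        have := congrArg (Units.val) this
        push_cast at this
        simpa [AlgEquiv.smul_units_def] using this
      have hxσ := hy σ
      rw [hw, map_div₀, map_pow]
      have hz0 : (z : L) ≠ 0 := z.ne_zero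
      have hx0 : (x : L) ≠ 0 := x.ne_zero
      field_simp
      have e1 : σ (x : L) = (y σ : L) ^ M * (x : L) := by
        field_simp at hxσ
        linear_combination hxσ
      have e2 : σ (z : L) = (y σ : L) * (z : L) := by
        field_simp at hzσ
        linear_combination hzσ
      rw [e1, e2]
      ring
    obtain ⟨a, ha⟩ := fixed_mem_range_algebraMap K L w hwfix
    have hw0 : w ≠ 0 := div_ne_zero x.ne_zero (pow_ne_zero _ z.ne_zero)
    have ha0 : a ≠ 0 := by
      rintro rfl; simp at ha; exact hw0 ha.symm
    refine ⟨Units.mk0 a ha0, z, ?_⟩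
    have : (x : L) = w * (z : L) ^ M := by
      rw [hw]; field_simp
    rw [this, Units.val_mk0, ha]
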